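/- Under the standing assumptions, the independent advertising firm's expected profit πO is strictly decreasing in the targeting precision: for all β1, β2 with 0 ≤ β1 < β2 ≤ 1, πO(β2) < πO(β1); in particular, β = 0 is the unique maximizer of πO on [0,1]. -/

import Mathlib

set_option maxHeartbeats 4000000

private lemma aux_cv (a d : ℝ) (hd : 0 < d) (hda : d < a) (ha : a < 1) :
    0 ≤ 8*d^3+24*a*d^2-36*a*d^3+24*a^2*d-72*a^2*d^2+56*a^2*d^3+8*a^3-36*a^3*d+48*a^3*d^2-24*a^3*d^3 := by
  nlinarith [mul_nonneg (mul_nonneg (sq_nonneg (a-d)) hd.le) (sub_pos.2 ha).le,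
             mul_nonneg (sq_nonneg (a-d)) (sub_pos.2 ha).le,
             mul_nonneg (mul_nonneg (sq_nonneg (a-d)) hd.le) hd.le,
             mul_nonneg (mul_nonneg (mul_pos hd hd).le (sub_pos.2 ha).le) (sub_pos.2 hda).le,
             mul_nonneg (mul_nonneg (mul_pos hd hd).le hd.le) (sub_pos.2 ha).le,
             mul_nonneg (mul_nonneg (mul_pos hd hd).le hd.le) (sub_pos.2 hda).le,
             mul_nonneg (mul_nonneg (mul_pos hd hd).le (sub_pos.2 hda).le) (sub_pos.2 hda).le,
             mul_nonneg (mul_nonneg (sq_nonneg (1-d)) hd.le) hd.le,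
             mul_pos (mul_pos hd hd) hd,
             mul_nonneg (mul_nonneg (sq_nonneg (a-d)) (sub_pos.2 ha).le) (sub_pos.2 ha).le,
             mul_nonneg (mul_nonneg (sq_nonneg (a-d)) hd.le) (sub_pos.2 hda).le]

private lemma aux_R1 (t v a d : ℝ) (ht : 0 < t) (hd : 0 < d) (hda : d < a) (ha : a < 1)
    (hv1 : t*(2*a+2*d-a*d) < 2*v*(2-a)*d) (hv2 : v < 2*t) :
    0 ≤ v^2*a^2*d^2 - 8*t*v*a^2*d + 2*t*v*a^2*d^2 - 4*t^2*d^2 + 8*t^2*a*d + 12*t^2*a^2 - 8*t^2*a^2*d + t^2*a^2*d^2 := by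
  have h2a : 0 < 2 - a := by linarith
  have hvt : t < v := by nlinarith [mul_pos hd (sub_pos.2 hda), mul_pos ht hd, mul_pos h2a hd]
  have h6 : 0 < 6*t - d*(v+t) := by nlinarith
  rcases le_or_gt (d*(v+t)) (2*t) with hc | hc
  · nlinarith [mul_nonneg (mul_nonneg (sq_nonneg a) (sub_nonneg.2 hc)) h6.le,
               mul_pos (mul_pos (mul_pos ht ht) hd) (by linarith : (0:ℝ) < 2*a - d)]
  · have hd23 : 2*t < 3*d*t := by nlinarith
    have hkey : 0 ≤ 2*a^2 + 2*a*d - 3*a^2*d - d^2 := by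
      nlinarith [mul_nonneg (sub_pos.2 ha).le (sub_pos.2 hda).le, sq_nonneg (a-d),
                 mul_nonneg (mul_nonneg (sub_pos.2 ha).le (sub_pos.2 hda).le) hd.le,
                 mul_nonneg (mul_nonneg (sub_pos.2 ha).le (sub_pos.2 ha).le) hd.le]
    nlinarith [mul_nonneg (mul_nonneg (sq_nonneg a) (by linarith : (0:ℝ) ≤ d*(v+t) - 2*t)) (by linarith : (0:ℝ) ≤ d*(v+t) - 2*t),
               mul_nonneg (mul_nonneg (mul_nonneg (sq_nonneg a) (by linarith : (0:ℝ) ≤ 4*t)) hd.le) (by linarith : (0:ℝ) ≤ 3*t - (v+t)),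
               mul_nonneg (mul_pos (mul_pos ht ht) (by linarith : (0:ℝ) < 4)).le hkey]

private lemma aux_cancel (s g : ℝ) (hs : 0 < s) (h : 0 < 2*s*g) : 0 < g := by
  by_contra hcon
  push_neg at hcon
  nlinarith [mul_nonneg hs.le (neg_nonneg.2 hcon)]

/-- Key inequality: positivity of F(x,y) on the box. -/
private lemma aux_key (t v a d x y : ℝ) (ht : 0 < t) (hd : 0 < d) (hda : d < a) (ha : a < 1)
    (hv1 : t*(2*a+2*d-a*d) < 2*v*(2-a)*d) (hv2 : v < 2*t)
    (hx1 : d*(4-3*a) ≤ x) (hx2 : x ≤ 2*(a+d)-3*a*d)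
    (hy1 : d*(4-3*a) ≤ y) (hy2 : y ≤ 2*(a+d)-3*a*d) :
    0 < (2*t*v - v^2 - t^2)*x^2*y^2
      - (v^2*a^2*d^2 - 8*t*v*a^2*d + 2*t*v*a^2*d^2 - 4*t^2*d^2 + 8*t^2*a*d + 12*t^2*a^2 - 8*t^2*a^2*d + t^2*a^2*d^2)*(x*y)
      - (-4*v^2*a^3*d^2 + 3*v^2*a^3*d^3 + 16*t*v*a^2*d^2 - 12*t*v*a^2*d^3 + 16*t*v*a^3*d - 20*t*v*a^3*d^2 + 6*t*v*a^3*d^3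
          - 16*t^2*a*d^2 + 12*t^2*a*d^3 - 32*t^2*a^2*d + 40*t^2*a^2*d^2 - 12*t^2*a^2*d^3 - 16*t^2*a^3 + 28*t^2*a^3*d - 16*t^2*a^3*d^2 + 3*t^2*a^3*d^3)*(x+y) := by
  have h2a : 0 < 2 - a := by linarith
  have ha0 : 0 < a := hd.trans hda
  have hvt : t < v := by nlinarith [mul_pos hd (sub_pos.2 hda), mul_pos ht hd, mul_pos h2a hd]
  have hmain : ∀ R1 R0 sM : ℝ,
      R1 = v^2*a^2*d^2 - 8*t*v*a^2*d + 2*t*v*a^2*d^2 - 4*t^2*d^2 + 8*t^2*a*d + 12*t^2*a^2 - 8*t^2*a^2*d + t^2*a^2*d^2 →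
      R0 = -4*v^2*a^3*d^2 + 3*v^2*a^3*d^3 + 16*t*v*a^2*d^2 - 12*t*v*a^2*d^3 + 16*t*v*a^3*d - 20*t*v*a^3*d^2 + 6*t*v*a^3*d^3
          - 16*t^2*a*d^2 + 12*t^2*a*d^3 - 32*t^2*a^2*d + 40*t^2*a^2*d^2 - 12*t^2*a^2*d^3 - 16*t^2*a^3 + 28*t^2*a^3*d - 16*t^2*a^3*d^2 + 3*t^2*a^3*d^3 →
      sM = 2*(a+d)-3*a*d →
      0 < (2*t*v - v^2 - t^2)*x^2*y^2 - R1*(x*y) - R0*(x+y) := by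
    intro R1 R0 sM e1 e2 e3
    have hsm : 0 < d*(4-3*a) := by nlinarith
    have hx0 : 0 < x := lt_of_lt_of_le hsm hx1
    have hy0 : 0 < y := lt_of_lt_of_le hsm hy1
    have hx2' : x ≤ sM := by rw [e3]; exact hx2
    have hy2' : y ≤ sM := by rw [e3]; exact hy2
    have hsM : 0 < sM := lt_of_lt_of_le hx0 hx2'
    have hR1 : 0 ≤ R1 := by rw [e1]; exact aux_R1 t v a d ht hd hda ha hv1 hv2
    have hG : 0 < (2*t*v - v^2 - t^2)*sM^3 - R1*sM - 2*R0 := by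
      subst e1 e2 e3
      have hcv : 0 ≤ 8*d^3+24*a*d^2-36*a*d^3+24*a^2*d-72*a^2*d^2+56*a^2*d^3+8*a^3-36*a^3*d+48*a^3*d^2-24*a^3*d^3 :=
        aux_cv a d hd hda ha
      have hct : 0 < 16*a^2*d^2 - 16*a^2*d^3 + 16*a^3*d - 24*a^3*d^2 + 12*a^3*d^3 := by
        nlinarith [mul_nonneg (mul_nonneg (mul_pos (mul_pos ha0 ha0) hd).le hd.le) (by linarith : (0:ℝ) ≤ 1 - d),
                   mul_nonneg (mul_pos (mul_pos (mul_pos ha0 ha0) ha0) hd).le (sq_nonneg (d-1)),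
                   mul_pos (mul_pos (mul_pos ha0 ha0) ha0) hd]
      have hH : 0 < v*(8*d^3+24*a*d^2-36*a*d^3+24*a^2*d-72*a^2*d^2+56*a^2*d^3+8*a^3-36*a^3*d+48*a^3*d^2-24*a^3*d^3)
                 + t*(16*a^2*d^2 - 16*a^2*d^3 + 16*a^3*d - 24*a^3*d^2 + 12*a^3*d^3) := by
        have hv0 : 0 < v := ht.trans hvt
        nlinarith [mul_nonneg hv0.le hcv, mul_pos ht hct]
      have h2tv : 0 < 2*t - v := by linarith
      nlinarith [mul_pos h2tv hH]
    have hu4 : 4*(x*y) ≤ (x+y)^2 := by nlinarith [sq_nonneg (x-y)]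
    have hu0 : 0 < x*y := mul_pos hx0 hy0
    have hw0 : 0 < x + y := by linarith
    have hwM : x + y ≤ 2*sM := by linarith
    have h8 : 0 ≤ 8*sM^3 - (x+y)^3 := by nlinarith [pow_le_pow_left₀ hw0.le hwM 3]
    have hvt2 : (0:ℝ) ≤ (v-t)^2 := sq_nonneg _
    have hA : (2*t*v - v^2 - t^2)*((x+y)^2/4)^2 - R1*((x+y)^2/4) - R0*(x+y)
        ≤ (2*t*v - v^2 - t^2)*x^2*y^2 - R1*(x*y) - R0*(x+y) := by
      have h1 : 0 ≤ (x+y)^2/4 - x*y := by linarith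
      have h2 : 0 ≤ (x+y)^2/4 + x*y := by positivity
      nlinarith [mul_nonneg hvt2 (mul_nonneg h1 h2), mul_nonneg hR1 h1]
    have hB : (x+y) * (sM * ((2*t*v - v^2 - t^2)*sM^3 - R1*sM - 2*R0))
        ≤ 2*sM*((2*t*v - v^2 - t^2)*((x+y)^2/4)^2 - R1*((x+y)^2/4) - R0*(x+y)) := by
      nlinarith [mul_nonneg hvt2 (mul_nonneg (mul_nonneg hsM.le hw0.le) h8),
                 mul_nonneg hR1 (mul_nonneg (mul_nonneg hsM.le hw0.le) (by linarith : (0:ℝ) ≤ 2*sM - (x+y)))]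
    have hC : 0 < (x+y) * (sM * ((2*t*v - v^2 - t^2)*sM^3 - R1*sM - 2*R0)) :=
      mul_pos hw0 (mul_pos hsM hG)
    have hgW : 0 < (2*t*v - v^2 - t^2)*((x+y)^2/4)^2 - R1*((x+y)^2/4) - R0*(x+y) :=
      aux_cancel _ _ hsM (lt_of_lt_of_le hC hB)
    linarith
  exact hmain _ _ _ rfl rfl rfl

theorem stmt_9 (t v α δ r : ℝ) (ht : 0 < t) (hδ : 0 < δ) (hδα : δ < α) (hα : α < 1)
    (hr0 : 0 < r) (hr1 : r < 1)
    (hv1 : t * (α / ((2 - α) * δ) + 1 / 2) < v) (hv2 : v < 2 * t) :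
    let D : ℝ → ℝ := fun β => 2 * (α + δ) - 3 * α * δ - 2 * β * (α - δ)
    let L1 : ℝ → ℝ := fun β => α * δ * (t - 2 * v) + v * (α + δ) - β * (α - δ) * (v - t)
    let L3 : ℝ → ℝ := fun β =>
      α * (v * (1 - β ^ 2) - (3 - β) * β * t) -
        δ * (t * (α * (1 - 2 * β) + β * (1 + β)) - (β + 1) * v * (1 - α + β))
    let πO : ℝ → ℝ := fun β => (1 - r) * L1 β * L3 β * α * (α - δ) / (t * (D β) ^ 2)
    (∀ β1 β2 : ℝ, 0 ≤ β1 → β1 < β2 → β2 ≤ 1 → πO β2 < πO β1) ∧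
      (∀ β : ℝ, 0 ≤ β → β ≤ 1 → β ≠ 0 → πO β < πO 0) := by
  intro D L1 L3 πO
  have h2a : 0 < (2 - α) * δ := by nlinarith
  have hv1' : t*(2*α+2*δ-α*δ) < 2*v*(2-α)*δ := by
    have h1 : t * (α / ((2 - α) * δ)) = t * α / ((2 - α) * δ) := by ring
    have h2 : t * α / ((2 - α) * δ) < v - t/2 := by
      have := hv1
      rw [mul_add] at this
      rw [← h1]; linarith
    have h3 : t * α < (v - t/2) * ((2 - α) * δ) := (div_lt_iff₀ h2a).mp h2
    nlinarith [h3]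
  have hmain : ∀ β1 β2 : ℝ, 0 ≤ β1 → β1 < β2 → β2 ≤ 1 → πO β2 < πO β1 := by
    intro β1 β2 hb1 h12 hb2
    have hD1 : 0 < D β1 := by
      simp only [D]; nlinarith
    have hD2 : 0 < D β2 := by
      simp only [D]; nlinarith
    have hF := aux_key t v α δ (D β1) (D β2) ht hδ hδα hα hv1' hv2
      (by simp only [D]; nlinarith) (by simp only [D]; nlinarith)
      (by simp only [D]; nlinarith) (by simp only [D]; nlinarith)
    have hN : 0 < L1 β1 * L3 β1 * (D β2)^2 - L1 β2 * L3 β2 * (D β1)^2 := by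
      have hid : 4*(L1 β1 * L3 β1 * (D β2)^2 - L1 β2 * L3 β2 * (D β1)^2)
          = (β2 - β1) * ((2*t*v - v^2 - t^2)*(D β1)^2*(D β2)^2
            - (v^2*α^2*δ^2 - 8*t*v*α^2*δ + 2*t*v*α^2*δ^2 - 4*t^2*δ^2 + 8*t^2*α*δ + 12*t^2*α^2 - 8*t^2*α^2*δ + t^2*α^2*δ^2)*((D β1)*(D β2))
            - (-4*v^2*α^3*δ^2 + 3*v^2*α^3*δ^3 + 16*t*v*α^2*δ^2 - 12*t*v*α^2*δ^3 + 16*t*v*α^3*δ - 20*t*v*α^3*δ^2 + 6*t*v*α^3*δ^3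
              - 16*t^2*α*δ^2 + 12*t^2*α*δ^3 - 32*t^2*α^2*δ + 40*t^2*α^2*δ^2 - 12*t^2*α^2*δ^3 - 16*t^2*α^3 + 28*t^2*α^3*δ - 16*t^2*α^3*δ^2 + 3*t^2*α^3*δ^3)*((D β1)+(D β2))) := by
        simp only [D, L1, L3]; ring
      linarith [mul_pos (sub_pos.2 h12) hF, hid]
    have hC : 0 < (1 - r) * α * (α - δ) * t := by
      have : 0 < α := hδ.trans hδα
      have : 0 < α - δ := sub_pos.2 hδα
      have : 0 < 1 - r := sub_pos.2 hr1
      positivity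
    simp only [πO]
    rw [div_lt_div_iff₀ (by positivity) (by positivity)]
    linarith [mul_pos hC hN]
  refine ⟨hmain, fun β h0 h1 hne => ?_⟩
  exact hmain 0 β le_rfl (lt_of_le_of_ne h0 (Ne.symm hne)) h1
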